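/- Let ψ be an N-function with conjugate ψ* such that ∫₀ (ψ*)'(1/ρ) dρ = ∞. Then for every ε > 0 and δ > 0, there exist 0 < r₁ < r₂ ≤ ε such that the unique constant c = c_{r₁,r₂} > 0 solving ∫_{r₁}^{r₂} (ψ*)'(c/ρ) dρ = 1 satisfies c ≤ δ. -/

import Mathlib

open MeasureTheory Set Real Filter
open scoped Topology

private lemma aux_intOn {g : ℝ → ℝ} (hcont : ContinuousOn g (Set.Ioi 0))
    {t r₁ r₂ : ℝ} (ht : 0 < t) (hr₁ : 0 < r₁) :
    IntegrableOn (fun ρ => g (t / ρ)) (Set.Icc r₁ r₂) volume := by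
  have hc : ContinuousOn (fun ρ => g (t / ρ)) (Set.Icc r₁ r₂) := by
    apply hcont.comp
    · exact ContinuousOn.div continuousOn_const continuousOn_id
        (fun ρ hρ => ne_of_gt (lt_of_lt_of_le hr₁ hρ.1))
    · exact fun ρ hρ => div_pos ht (lt_of_lt_of_le hr₁ hρ.1)
  exact hc.integrableOn_compact isCompact_Icc

private lemma aux_contOn {g : ℝ → ℝ} (hcont : ContinuousOn g (Set.Ioi 0))
    {t r₁ r₂ : ℝ} (ht : 0 < t) (hr₁ : 0 < r₁) :
    ContinuousOn (fun ρ => g (t / ρ)) (Set.Ioo r₁ r₂) := by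
  apply hcont.comp
  · exact ContinuousOn.div continuousOn_const continuousOn_id
      (fun ρ hρ => ne_of_gt (lt_of_lt_of_le hr₁ (le_of_lt hρ.1)))
  · exact fun ρ hρ => div_pos ht (lt_of_lt_of_le hr₁ (le_of_lt hρ.1))

private lemma aux_div {g : ℝ → ℝ} (hpos : ∀ s : ℝ, 0 < s → 0 < g s)
    (hcont : ContinuousOn g (Set.Ioi 0))
    (hdiv : ¬ IntegrableOn (fun ρ : ℝ => g ρ⁻¹) (Set.Ioo 0 1) volume)
    {b₁ : ℝ} (hb₁0 : 0 < b₁) (hb₁1 : b₁ ≤ 1) (M : ℝ) :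
    ∃ a : ℝ, 0 < a ∧ a < b₁ ∧ M < ∫ σ in Set.Ioo a b₁, g σ⁻¹ := by
  by_contra hcon
  push_neg at hcon
  have hfun : (fun σ : ℝ => g σ⁻¹) = fun σ => g (1 / σ) := by
    funext σ; rw [one_div]
  have han : ∀ n : ℕ, 0 < b₁ / (n + 2) := by
    intro n; positivity
  have hanlt : ∀ n : ℕ, b₁ / (n + 2) < b₁ := by
    intro n
    apply div_lt_self hb₁0
    have : (0:ℝ) ≤ (n:ℝ) := Nat.cast_nonneg n
    linarith
  have hfi : ∀ n : ℕ, IntegrableOn (fun σ : ℝ => g σ⁻¹) (Set.Ioc (b₁ / (n+2)) b₁) volume := by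
    intro n
    rw [hfun]
    exact (aux_intOn hcont one_pos (han n)).mono_set Set.Ioc_subset_Icc_self
  have ha : Tendsto (fun n : ℕ => b₁ / ((n:ℝ) + 2)) atTop (𝓝 0) := by
    apply Tendsto.div_atTop tendsto_const_nhds
    exact tendsto_atTop_add_const_right atTop 2 tendsto_natCast_atTop_atTop
  have key : IntegrableOn (fun σ : ℝ => g σ⁻¹) (Set.Ioc 0 b₁) volume := by
    apply integrableOn_Ioc_of_intervalIntegral_norm_bounded_left (I := M)
      (a := fun n : ℕ => b₁ / ((n:ℝ) + 2)) (l := atTop) hfi ha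
    filter_upwards with n
    have : (∫ x in Set.Ioc (b₁ / ((n:ℝ)+2)) b₁, ‖g x⁻¹‖) = ∫ x in Set.Ioc (b₁ / ((n:ℝ)+2)) b₁, g x⁻¹ := by
      apply setIntegral_congr_fun measurableSet_Ioc
      intro x hx
      exact Real.norm_of_nonneg (le_of_lt (hpos _ (inv_pos.2 (lt_trans (han n) hx.1))))
    rw [this, integral_Ioc_eq_integral_Ioo]
    exact hcon _ (han n) (hanlt n)
  apply hdiv
  have h1 : IntegrableOn (fun σ : ℝ => g σ⁻¹) (Set.Icc b₁ 1) volume := by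
    rw [hfun]; exact aux_intOn hcont one_pos hb₁0
  refine (key.union h1).mono_set ?_
  intro x hx
  rcases le_or_gt x b₁ with h|h
  · exact Or.inl ⟨hx.1, h⟩
  · exact Or.inr ⟨le_of_lt h, le_of_lt hx.2⟩

private lemma aux_subst {g : ℝ → ℝ} {δ a b : ℝ} (hδ : 0 < δ) (hab : a ≤ b) :
    (∫ ρ in Set.Ioo (δ*a) (δ*b), g (δ/ρ)) = δ * ∫ σ in Set.Ioo a b, g σ⁻¹ := by
  have hab' : δ * a ≤ δ * b := by nlinarith
  rw [← integral_Ioc_eq_integral_Ioo, ← integral_Ioc_eq_integral_Ioo,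
    ← intervalIntegral.integral_of_le hab, ← intervalIntegral.integral_of_le hab']
  have h := intervalIntegral.integral_comp_mul_left (a := a) (b := b)
    (f := fun ρ => g (δ/ρ)) (c := δ) hδ.ne'
  have hfun : (fun x : ℝ => g (δ/(δ*x))) = fun x => g x⁻¹ := by
    funext x
    rcases eq_or_ne x 0 with hx | hx
    · simp [hx]
    · congr 1; field_simp
  have h2 : (∫ x in a..b, g (δ/(δ*x))) = δ⁻¹ • ∫ x in δ*a..δ*b, g (δ/x) := by
    simpa using h
  rw [hfun, smul_eq_mul] at h2
  rw [h2]
  field_simp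

private lemma aux_contF {g : ℝ → ℝ} (hmono : MonotoneOn g (Set.Ioi 0))
    (hpos : ∀ s : ℝ, 0 < s → 0 < g s) (hcont : ContinuousOn g (Set.Ioi 0))
    {r₁ r₂ : ℝ} (hr₁ : 0 < r₁) {t : ℝ} (ht : 0 < t) :
    ContinuousAt (fun c => ∫ ρ in Set.Ioo r₁ r₂, g (c/ρ)) t := by
  apply continuousAt_of_dominated (bound := fun ρ => g ((t+1)/ρ))
  · filter_upwards [isOpen_Ioi.mem_nhds (show t ∈ Set.Ioi (0:ℝ) from ht)] with x hx
    exact (aux_contOn hcont hx hr₁).aestronglyMeasurable measurableSet_Ioo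
  · filter_upwards [isOpen_Ioo.mem_nhds (show t ∈ Set.Ioo (0:ℝ) (t+1) from ⟨ht, by linarith⟩)]
      with x hx
    rw [ae_restrict_iff' measurableSet_Ioo]
    filter_upwards with ρ hρ
    have hρ0 : 0 < ρ := lt_trans hr₁ hρ.1
    rw [Real.norm_of_nonneg (le_of_lt (hpos _ (div_pos hx.1 hρ0)))]
    refine hmono (Set.mem_Ioi.2 (div_pos hx.1 hρ0))
      (Set.mem_Ioi.2 (div_pos (by linarith [hx.2] : (0:ℝ) < t+1) hρ0)) ?_
    have hxle : x ≤ t + 1 := le_of_lt hx.2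
    gcongr
  · exact (aux_intOn hcont (by linarith : (0:ℝ) < t + 1) hr₁).mono_set Set.Ioo_subset_Icc_self
  · rw [ae_restrict_iff' measurableSet_Ioo]
    filter_upwards with ρ hρ
    have hρ0 : 0 < ρ := lt_trans hr₁ hρ.1
    have hg : ContinuousAt g (t/ρ) :=
      hcont.continuousAt (isOpen_Ioi.mem_nhds (div_pos ht hρ0))
    have hdiv' : ContinuousAt (fun x : ℝ => x / ρ) t := (continuous_id.div_const ρ).continuousAt
    exact ContinuousAt.comp (g := g) (f := fun x : ℝ => x / ρ) (x := t) hg hdiv'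

private lemma aux_eqOn {g : ℝ → ℝ} (hmono : MonotoneOn g (Set.Ioi 0))
    (hpos : ∀ s : ℝ, 0 < s → 0 < g s) (hcont : ContinuousOn g (Set.Ioi 0))
    {r₁ r₂ p q : ℝ} (hr₁ : 0 < r₁) (hp : 0 < p) (hpq : p ≤ q)
    (hint : (∫ ρ in Set.Ioo r₁ r₂, g (q/ρ)) = ∫ ρ in Set.Ioo r₁ r₂, g (p/ρ)) :
    ∀ ρ ∈ Set.Ioo r₁ r₂, g (q/ρ) = g (p/ρ) := by
  have hq : 0 < q := lt_of_lt_of_le hp hpq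
  set f : ℝ → ℝ := fun ρ => g (q/ρ) - g (p/ρ) with hf
  have intq : IntegrableOn (fun ρ => g (q/ρ)) (Set.Ioo r₁ r₂) volume :=
    (aux_intOn hcont hq hr₁).mono_set Set.Ioo_subset_Icc_self
  have intp : IntegrableOn (fun ρ => g (p/ρ)) (Set.Ioo r₁ r₂) volume :=
    (aux_intOn hcont hp hr₁).mono_set Set.Ioo_subset_Icc_self
  have hfint : IntegrableOn f (Set.Ioo r₁ r₂) volume := intq.sub intp
  have hptnn : ∀ ρ ∈ Set.Ioo r₁ r₂, 0 ≤ f ρ := by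
    intro ρ hρ
    have hρ0 : 0 < ρ := lt_trans hr₁ hρ.1
    refine sub_nonneg.2 (hmono (Set.mem_Ioi.2 (div_pos hp hρ0))
      (Set.mem_Ioi.2 (div_pos hq hρ0)) ?_)
    gcongr
  have hnn : 0 ≤ᵐ[volume.restrict (Set.Ioo r₁ r₂)] f :=
    (ae_restrict_iff' measurableSet_Ioo).2 (Filter.Eventually.of_forall hptnn)
  have hzero : (∫ ρ in Set.Ioo r₁ r₂, f ρ) = 0 := by
    rw [hf]
    rw [integral_sub intq intp]
    rw [hint]; ring
  have hae : f =ᵐ[volume.restrict (Set.Ioo r₁ r₂)] 0 :=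
    (integral_eq_zero_iff_of_nonneg_ae hnn hfint).1 hzero
  intro ρ₀ hρ₀
  by_contra hne
  have hd : 0 < f ρ₀ :=
    lt_of_le_of_ne (hptnn ρ₀ hρ₀) (Ne.symm (sub_ne_zero.2 hne))
  have hfc : ContinuousAt f ρ₀ :=
    (((aux_contOn hcont hq hr₁).sub (aux_contOn hcont hp hr₁))).continuousAt
      (isOpen_Ioo.mem_nhds hρ₀)
  have hV : f ⁻¹' (Set.Ioi 0) ∈ 𝓝 ρ₀ := hfc (Ioi_mem_nhds hd)
  have hW : f ⁻¹' (Set.Ioi 0) ∩ Set.Ioo r₁ r₂ ∈ 𝓝 ρ₀ :=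
    Filter.inter_mem hV (isOpen_Ioo.mem_nhds hρ₀)
  obtain ⟨U, hUsub, hUopen, hUmem⟩ := mem_nhds_iff.1 hW
  have h1 : ∀ᵐ x ∂(volume : Measure ℝ), x ∈ Set.Ioo r₁ r₂ → f x = 0 := by
    have := (ae_restrict_iff' measurableSet_Ioo).1 hae
    filter_upwards [this] with x hx
    intro hx2
    simpa using hx hx2
  have hU0 : volume U = 0 := by
    refine measure_mono_null ?_ h1
    intro x hxU
    have := hUsub hxU
    intro hcontra
    exact ne_of_gt (Set.mem_preimage.1 this.1) (hcontra this.2)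
  exact absurd hU0 (ne_of_gt (hUopen.measure_pos volume ⟨ρ₀, hUmem⟩))

private lemma aux_const {f : ℝ → ℝ} {a b : ℝ} (hf : ContinuousOn f (Set.Ioo a b))
    {P : Set ℝ} (hP : P.Countable) (himg : ∀ x ∈ Set.Ioo a b, f x ∈ P)
    {x y : ℝ} (hx : x ∈ Set.Ioo a b) (hy : y ∈ Set.Ioo a b) : f x = f y := by
  by_contra hne
  set u := min (f x) (f y) with hu
  set v := max (f x) (f y) with hv
  have huv : u < v := min_lt_max.2 hne
  have hconn : IsPreconnected (f '' Set.Ioo a b) := (isPreconnected_Ioo).image f hf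
  have humem : u ∈ f '' Set.Ioo a b := by
    rcases min_choice (f x) (f y) with h | h <;> rw [hu, h]
    · exact ⟨x, hx, rfl⟩
    · exact ⟨y, hy, rfl⟩
  have hvmem : v ∈ f '' Set.Ioo a b := by
    rcases max_choice (f x) (f y) with h | h <;> rw [hv, h]
    · exact ⟨x, hx, rfl⟩
    · exact ⟨y, hy, rfl⟩
  have hIcc : Set.Icc u v ⊆ f '' Set.Ioo a b := hconn.Icc_subset humem hvmem
  have hsubP : Set.Icc u v ⊆ P := by
    intro z hz
    obtain ⟨w, hw, hwz⟩ := hIcc hz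
    exact hwz ▸ himg w hw
  have h0 : volume (Set.Icc u v) = 0 := (hP.mono hsubP).measure_zero volume
  rw [Real.volume_Icc] at h0
  exact absurd h0 (by simp [huv])

/-- If ∫₀ (ψ*)'(1/ρ) dρ = ∞ then the normalizing constants c_{r₁,r₂}
    can be made arbitrarily small with r₁ < r₂ ≤ ε. -/
theorem stmt_14 (g : ℝ → ℝ)
    (hmono : MonotoneOn g (Set.Ioi 0))
    (hpos : ∀ s : ℝ, 0 < s → 0 < g s)
    (hcont : ContinuousOn g (Set.Ioi 0))
    (hinf : Tendsto g atTop atTop)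
    (hdiv : ¬ IntegrableOn (fun ρ : ℝ => g ρ⁻¹) (Set.Ioo 0 1) volume) :
    ∀ ε δ : ℝ, 0 < ε → 0 < δ →
      ∃ r₁ r₂ : ℝ, 0 < r₁ ∧ r₁ < r₂ ∧ r₂ ≤ ε ∧
        ∃ c : ℝ, 0 < c ∧ c ≤ δ ∧
          (∫ ρ in Set.Ioo r₁ r₂, g (c / ρ)) = 1 ∧
          ∀ c' : ℝ, 0 < c' → (∫ ρ in Set.Ioo r₁ r₂, g (c' / ρ)) = 1 → c' = c := by
  intro ε δ hε hδ
  have hg1 : 0 < g 1 := hpos 1 one_pos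
  set r₂ : ℝ := min ε (1 / (2 * g 1)) with hr₂def
  have hr₂pos : 0 < r₂ := lt_min hε (by positivity)
  have hr₂ε : r₂ ≤ ε := min_le_left _ _
  have hr₂g : r₂ * g 1 ≤ 1/2 := by
    have h1 : r₂ ≤ 1/(2 * g 1) := min_le_right _ _
    calc r₂ * g 1 ≤ (1/(2*g 1)) * g 1 := by gcongr
      _ = 1/2 := by field_simp
  set P : Set ℝ := Set.range (fun q : ℚ => g q) with hPdef
  have hPcount : P.Countable := Set.countable_range _
  set b₁ : ℝ := min 1 (r₂/δ) with hb₁def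
  have hb₁0 : 0 < b₁ := lt_min one_pos (div_pos hr₂pos hδ)
  have hb₁1 : b₁ ≤ 1 := min_le_left _ _
  obtain ⟨a, ha0, hab, haM⟩ := aux_div hpos hcont hdiv hb₁0 hb₁1 (1/δ)
  set a₀ : ℝ := δ * a with ha₀def
  have ha₀0 : 0 < a₀ := mul_pos hδ ha0
  have hδb₁r₂ : δ * b₁ ≤ r₂ := by
    calc δ * b₁ ≤ δ * (r₂/δ) := by gcongr; exact min_le_right _ _
      _ = r₂ := by field_simp
  have ha₀b₁ : a₀ < δ * b₁ := by rw [ha₀def]; gcongr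
  have ha₀δ : a₀ < δ := by
    have : δ * b₁ ≤ δ * 1 := by gcongr
    rw [mul_one] at this
    linarith
  have ha₀r₂ : a₀ < r₂ := lt_of_lt_of_le ha₀b₁ hδb₁r₂
  have hbig : 1 < ∫ ρ in Set.Ioo a₀ r₂, g (δ/ρ) := by
    have hsub : (∫ ρ in Set.Ioo a₀ (δ*b₁), g (δ/ρ)) = δ * ∫ σ in Set.Ioo a b₁, g σ⁻¹ :=
      aux_subst hδ hab.le
    have h1 : 1 < ∫ ρ in Set.Ioo a₀ (δ*b₁), g (δ/ρ) := by
      rw [hsub]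
      calc (1:ℝ) = δ * (1/δ) := by field_simp
        _ < δ * ∫ σ in Set.Ioo a b₁, g σ⁻¹ := by gcongr
    refine lt_of_lt_of_le h1 ?_
    apply setIntegral_mono_set
    · exact (aux_intOn hcont hδ ha₀0).mono_set Set.Ioo_subset_Icc_self
    · exact (ae_restrict_iff' measurableSet_Ioo).2 (Filter.Eventually.of_forall
        (fun ρ hρ => (hpos _ (div_pos hδ (lt_trans ha₀0 hρ.1))).le))
    · exact (Set.Ioo_subset_Ioo_right hδb₁r₂).eventuallyLE
  have hTc : ((fun v : ℝ => r₂ - v⁻¹) '' P).Countable := hPcount.image _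
  have hex : ∃ x, x ∈ Set.Ioo (0:ℝ) a₀ ∧ x ∉ (fun v : ℝ => r₂ - v⁻¹) '' P := by
    by_contra h
    push_neg at h
    have hsub : Set.Ioo (0:ℝ) a₀ ⊆ (fun v : ℝ => r₂ - v⁻¹) '' P := fun x hx => h x hx
    have h0 := (hTc.mono hsub).measure_zero volume
    rw [Real.volume_Ioo] at h0
    exact absurd h0 (by simp [ha₀0])
  obtain ⟨r₁, hr₁mem, hr₁P⟩ := hex
  have hr₁0 : 0 < r₁ := hr₁mem.1
  have hr₁a₀ : r₁ < a₀ := hr₁mem.2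
  have hr₁r₂ : r₁ < r₂ := lt_trans hr₁a₀ ha₀r₂
  have hr₁δ : r₁ < δ := lt_trans hr₁a₀ ha₀δ
  have hKP : (r₂ - r₁)⁻¹ ∉ P := by
    intro hmem
    refine hr₁P ⟨(r₂ - r₁)⁻¹, hmem, ?_⟩
    show r₂ - ((r₂ - r₁)⁻¹)⁻¹ = r₁
    rw [inv_inv]; ring
  refine ⟨r₁, r₂, hr₁0, hr₁r₂, hr₂ε, ?_⟩
  set F : ℝ → ℝ := fun t => ∫ ρ in Set.Ioo r₁ r₂, g (t/ρ) with hF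
  have hvol : (volume (Set.Ioo r₁ r₂)).toReal = r₂ - r₁ := by
    rw [Real.volume_Ioo, ENNReal.toReal_ofReal (by linarith)]
  have hFr₁ : F r₁ < 1 := by
    have hle : F r₁ ≤ ∫ _ρ in Set.Ioo r₁ r₂, g 1 := by
      apply setIntegral_mono_on
      · exact (aux_intOn hcont hr₁0 hr₁0).mono_set Set.Ioo_subset_Icc_self
      · exact integrableOn_const (by rw [Real.volume_Ioo]; exact ENNReal.ofReal_ne_top)
      · exact measurableSet_Ioo
      · intro ρ hρ
        have hρ0 : 0 < ρ := lt_trans hr₁0 hρ.1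
        exact hmono (Set.mem_Ioi.2 (div_pos hr₁0 hρ0)) (Set.mem_Ioi.2 one_pos)
          ((div_le_one hρ0).2 hρ.1.le)
    have hconst : (∫ _ρ in Set.Ioo r₁ r₂, g 1) = (r₂ - r₁) * g 1 := by
      rw [setIntegral_const, Measure.real, hvol, smul_eq_mul]
    nlinarith
  have hFδ : 1 < F δ := by
    refine lt_of_lt_of_le hbig ?_
    apply setIntegral_mono_set
    · exact (aux_intOn hcont hδ hr₁0).mono_set Set.Ioo_subset_Icc_self
    · exact (ae_restrict_iff' measurableSet_Ioo).2 (Filter.Eventually.of_forall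
        (fun ρ hρ => (hpos _ (div_pos hδ (lt_trans hr₁0 hρ.1))).le))
    · exact (Set.Ioo_subset_Ioo_left hr₁a₀.le).eventuallyLE
  have hFcont : ContinuousOn F (Set.Icc r₁ δ) := fun t ht =>
    (aux_contF hmono hpos hcont hr₁0 (lt_of_lt_of_le hr₁0 ht.1)).continuousWithinAt
  have h1mem : (1:ℝ) ∈ Set.Icc (F r₁) (F δ) := ⟨hFr₁.le, hFδ.le⟩
  obtain ⟨c, hcmem, hFc⟩ := intermediate_value_Icc hr₁δ.le hFcont h1mem
  have hc0 : 0 < c := lt_of_lt_of_le hr₁0 hcmem.1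
  refine ⟨c, hc0, hcmem.2, hFc, ?_⟩
  intro c' hc' hFc'
  by_contra hne
  set p : ℝ := min c c' with hp
  set q : ℝ := max c c' with hq
  have hp0 : 0 < p := lt_min hc0 hc'
  have hpq : p ≤ q := min_le_max
  have hq0 : 0 < q := lt_of_lt_of_le hp0 hpq
  have hpltq : p < q := min_lt_max.2 (Ne.symm hne)
  have hFq : F q = 1 := by
    rcases max_choice c c' with h | h <;> rw [hq, h]
    · exact hFc
    · exact hFc'
  have hFp : F p = 1 := by
    rcases min_choice c c' with h | h <;> rw [hp, h]
    · exact hFc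
    · exact hFc'
  have heq := aux_eqOn hmono hpos hcont hr₁0 hp0 hpq (hFq.trans hFp.symm)
  have himg : ∀ ρ ∈ Set.Ioo r₁ r₂, g (q/ρ) ∈ P := by
    intro ρ hρ
    have hρ0 : 0 < ρ := lt_trans hr₁0 hρ.1
    have hlt : p/ρ < q/ρ := by gcongr
    obtain ⟨qq, hq1, hq2⟩ := exists_rat_btwn hlt
    have hqq0 : (0:ℝ) < qq := lt_trans (div_pos hp0 hρ0) hq1
    have hle1 : g qq ≤ g (q/ρ) :=
      hmono (Set.mem_Ioi.2 hqq0) (Set.mem_Ioi.2 (div_pos hq0 hρ0)) hq2.le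
    have hge : g (q/ρ) ≤ g qq := by
      rw [heq ρ hρ]
      exact hmono (Set.mem_Ioi.2 (div_pos hp0 hρ0)) (Set.mem_Ioi.2 hqq0) hq1.le
    exact ⟨qq, le_antisymm hle1 hge⟩
  have hmid : (r₁ + r₂)/2 ∈ Set.Ioo r₁ r₂ := ⟨by linarith, by linarith⟩
  have hconsteq : ∀ ρ ∈ Set.Ioo r₁ r₂, g (q/ρ) = g (q/((r₁+r₂)/2)) :=
    fun ρ hρ => aux_const (aux_contOn hcont hq0 hr₁0) hPcount himg hρ hmid
  have hFqK : F q = (r₂ - r₁) * g (q/((r₁+r₂)/2)) := by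
    have : F q = ∫ _ρ in Set.Ioo r₁ r₂, g (q/((r₁+r₂)/2)) :=
      setIntegral_congr_fun measurableSet_Ioo (fun ρ hρ => hconsteq ρ hρ)
    rw [this, setIntegral_const, Measure.real, hvol, smul_eq_mul]
  have hKval : g (q/((r₁+r₂)/2)) = (r₂ - r₁)⁻¹ := by
    apply eq_inv_of_mul_eq_one_left
    rw [mul_comm, ← hFqK]
    exact hFq
  exact hKP (hKval ▸ himg _ hmid)
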